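/- Let ω ∈ ℝ and K, T > 0 satisfy ω > 2KT. Then there exists μ0 ∈ (0,1/2) such that f̄(μ0) = f̄(1−μ0) and f̄(s) > f̄(μ0) for every s ∈ [0,1] with s ∉ {μ0, 1−μ0}; that is, f̄ attains its minimum over [0,1] exactly at the two points μ0 and μ1 := 1−μ0. -/

import Mathlib

/-- The chemical free energy density `f̄(s) = ω s(1-s) + K T (s log s + (1-s) log (1-s))`.
Since `Real.log 0 = 0`, this formula automatically realizes the continuous extension
`f̄(0) = f̄(1) = 0`. -/
noncomputable def fbar (ω K T : ℝ) (s : ℝ) : ℝ :=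
  ω * s * (1 - s) + K * T * (s * Real.log s + (1 - s) * Real.log (1 - s))

open Real Set

private lemma fbar_cont (ω K T : ℝ) : Continuous (fbar ω K T) := by
  unfold fbar
  exact ((continuous_const.mul continuous_id).mul (continuous_const.sub continuous_id)).add
    (continuous_const.mul (Real.continuous_mul_log.add
      (Real.continuous_mul_log.comp (continuous_const.sub continuous_id))))

private lemma fbar_symm (ω K T s : ℝ) : fbar ω K T (1 - s) = fbar ω K T s := by
  unfold fbar
  rw [sub_sub_cancel]
  ring

private lemma fbar_hasDerivAt (ω K T s : ℝ) (h0 : 0 < s) (h1 : s < 1) :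
    HasDerivAt (fbar ω K T)
      (ω * (1 - 2 * s) + K * T * (Real.log s - Real.log (1 - s))) s := by
  have h1' : (0 : ℝ) < 1 - s := by linarith
  have hu : HasDerivAt (fun x : ℝ => 1 - x) (-1) s := by
    simpa using (hasDerivAt_id s).const_sub 1
  have e1 : HasDerivAt (fun x : ℝ => x * Real.log x) (Real.log s + 1) s :=
    Real.hasDerivAt_mul_log h0.ne'
  have e2 : HasDerivAt (fun x : ℝ => (1 - x) * Real.log (1 - x))
      ((Real.log (1 - s) + 1) * (-1)) s :=
    (Real.hasDerivAt_mul_log h1'.ne').comp s hu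
  have e3 : HasDerivAt (fun x : ℝ => ω * x * (1 - x))
      (ω * (1 - s) + ω * s * (-1)) s := by
    exact (((hasDerivAt_id' s).const_mul ω).mul hu).congr_deriv (by ring)
  have := e3.add ((e1.add e2).const_mul (K * T))
  exact this.congr_deriv (by ring)

set_option maxHeartbeats 1000000 in
/-- If `ω > 2KT` then `f̄` is a double-well function: it attains its minimum over `[0,1]`
exactly at two points `μ0 ∈ (0,1/2)` and `μ1 = 1 - μ0`. -/
theorem double_well_of_omega_gt (ω K T : ℝ) (hK : 0 < K) (hT : 0 < T)
    (hω : 2 * K * T < ω) :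
    ∃ μ0 ∈ Set.Ioo (0 : ℝ) (1 / 2),
      fbar ω K T μ0 = fbar ω K T (1 - μ0) ∧
      ∀ s ∈ Set.Icc (0 : ℝ) 1, s ≠ μ0 → s ≠ 1 - μ0 →
        fbar ω K T μ0 < fbar ω K T s := by
  set c := K * T with hcdef
  have hc0 : 0 < c := mul_pos hK hT
  have hω0 : 0 < ω := by linarith
  set g : ℝ → ℝ := fun s => ω * (1 - 2 * s) + c * (Real.log s - Real.log (1 - s)) with hgdef
  -- derivative of g
  have hg' : ∀ s : ℝ, 0 < s → s < 1 →
      HasDerivAt g (-2 * ω + c * (s⁻¹ + (1 - s)⁻¹)) s := by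
    intro s h0 h1
    have h1' : (0 : ℝ) < 1 - s := by linarith
    have hu : HasDerivAt (fun x : ℝ => 1 - x) (-1) s := by
      simpa using (hasDerivAt_id s).const_sub 1
    have e1 : HasDerivAt Real.log s⁻¹ s := Real.hasDerivAt_log h0.ne'
    have e2 : HasDerivAt (fun x : ℝ => Real.log (1 - x)) ((1 - s)⁻¹ * (-1)) s :=
      (Real.hasDerivAt_log h1'.ne').comp s hu
    have e3 : HasDerivAt (fun x : ℝ => ω * (1 - 2 * x)) (ω * (-2)) s := by
      simpa using (((hasDerivAt_id s).const_mul 2).const_sub 1).const_mul ω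
    have := e3.add ((e1.sub e2).const_mul c)
    exact this.congr_deriv (by ring)
  -- continuity of g away from 0 and 1
  have hgca : ∀ s : ℝ, 0 < s → s < 1 → ContinuousAt g s := by
    intro s h0 h1
    exact ((hg' s h0 h1).differentiableAt).continuousAt
  have hgc : ContinuousOn g (Set.Ioc (0 : ℝ) (1 / 2)) := by
    intro s hs
    exact (hgca s hs.1 (by linarith [hs.2])).continuousWithinAt
  -- inverse sum identity
  have hinv : ∀ z : ℝ, 0 < z → z < 1 → z⁻¹ + (1 - z)⁻¹ = 1 / (z * (1 - z)) := by
    intro z h0 h1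
    have h1' : (0 : ℝ) < 1 - z := by linarith
    field_simp
    ring
  -- g(1/2) = 0
  have hghalf : g (1 / 2 : ℝ) = 0 := by
    simp only [hgdef]
    norm_num
  -- the point b
  set t : ℝ := (ω - 2 * c) / (8 * ω) with htdef
  have ht0 : 0 < t := div_pos (by linarith) (by linarith)
  have ht8 : t < 1 / 8 := by
    rw [htdef, div_lt_iff₀ (by positivity)]
    nlinarith
  set b : ℝ := 1 / 2 - t with hbdef
  have hb0 : (0 : ℝ) < b := by rw [hbdef]; linarith
  have hbh : b < 1 / 2 := by rw [hbdef]; linarith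
  have hbkey : c < 2 * ω * (b * (1 - b)) := by
    have h1 : b * (1 - b) = 1 / 4 - t ^ 2 := by rw [hbdef]; ring
    rw [h1]
    have h2 : t ^ 2 < t * (1 / 8) := by nlinarith
    have h3 : t * (1 / 8) = (ω - 2 * c) / (64 * ω) := by rw [htdef]; ring
    have h4 : (ω - 2 * c) / (64 * ω) ≤ (ω - 2 * c) / (4 * ω) := by
      apply div_le_div_of_nonneg_left (by linarith) (by positivity) (by linarith)
    have h5 : t ^ 2 < (ω - 2 * c) / (4 * ω) := by linarith
    have h5' : 2 * ω * t ^ 2 < 2 * ω * ((ω - 2 * c) / (4 * ω)) :=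
      mul_lt_mul_of_pos_left h5 (by linarith)
    have h7 : 2 * ω * ((ω - 2 * c) / (4 * ω)) = (ω - 2 * c) / 2 := by
      field_simp; ring
    rw [h7] at h5'
    nlinarith
  -- deriv g is negative on Ioo b (1/2)
  have hderivneg : ∀ x ∈ Set.Ioo b (1 / 2 : ℝ), deriv g x < 0 := by
    intro x hx
    have hx0 : 0 < x := lt_trans hb0 hx.1
    have hx1 : x < 1 := by linarith [hx.2]
    have h1x : 0 < 1 - x := by linarith
    rw [(hg' x hx0 hx1).deriv, hinv x hx0 hx1]
    have hmono : b * (1 - b) < x * (1 - x) := by nlinarith [hx.1, hx.2]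
    have hpos : 0 < x * (1 - x) := mul_pos hx0 h1x
    have : c / (x * (1 - x)) < 2 * ω := by
      rw [div_lt_iff₀ hpos]
      nlinarith
    have : c * (1 / (x * (1 - x))) < 2 * ω := by
      rw [mul_one_div]; exact this
    linarith
  -- g is strictly decreasing on [b, 1/2], hence g b > 0
  have hanti : StrictAntiOn g (Set.Icc b (1 / 2)) := by
    apply strictAntiOn_of_deriv_neg (convex_Icc _ _)
    · intro s hs
      exact (hgca s (lt_of_lt_of_le hb0 hs.1) (by linarith [hs.2])).continuousWithinAt
    · rw [interior_Icc]; exact hderivneg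
  have hgb : 0 < g b := by
    have := hanti (Set.left_mem_Icc.2 hbh.le) (Set.right_mem_Icc.2 hbh.le) hbh
    rwa [hghalf] at this
  -- explicit point s₁ near 0 where g < 0
  set s₁ : ℝ := min (b / 2) (Real.exp (-(|ω| + c * Real.log 2) / c) / 2) with hs₁def
  have hs₁0 : 0 < s₁ := lt_min (by positivity) (by positivity)
  have hs₁b : s₁ < b := lt_of_le_of_lt (min_le_left _ _) (by linarith)
  have hs₁q : s₁ < 1 / 2 := lt_trans hs₁b hbh
  have hgs₁ : g s₁ < 0 := by
    have hlog1 : Real.log s₁ < -(|ω| + c * Real.log 2) / c := by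
      calc Real.log s₁ ≤ Real.log (Real.exp (-(|ω| + c * Real.log 2) / c) / 2) :=
            Real.log_le_log hs₁0 (min_le_right _ _)
        _ < Real.log (Real.exp (-(|ω| + c * Real.log 2) / c)) := by
            apply Real.log_lt_log (by positivity); linarith [Real.exp_pos (-(|ω| + c * Real.log 2) / c)]
        _ = -(|ω| + c * Real.log 2) / c := Real.log_exp _
    have hlog2 : Real.log (1 - s₁) ≥ Real.log (1 / 2) := by
      apply Real.log_le_log (by norm_num)
      linarith
    have habs : ω * (1 - 2 * s₁) ≤ |ω| := by
      calc ω * (1 - 2 * s₁) ≤ |ω * (1 - 2 * s₁)| := le_abs_self _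
        _ = |ω| * |1 - 2 * s₁| := abs_mul _ _
        _ ≤ |ω| * 1 := by
            apply mul_le_mul_of_nonneg_left _ (abs_nonneg _)
            rw [abs_le]; constructor <;> linarith
        _ = |ω| := mul_one _
    have hlhalf : Real.log (1 / 2) = -Real.log 2 := by
      rw [Real.log_div one_ne_zero two_ne_zero, Real.log_one]; ring
    have h1 : c * Real.log s₁ < -(|ω| + c * Real.log 2) := by
      have hm := mul_lt_mul_of_pos_left hlog1 hc0
      have he : c * (-(|ω| + c * Real.log 2) / c) = -(|ω| + c * Real.log 2) := by
        field_simp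
      linarith [hm, he.le, he.ge]
    have h2 : -(c * Real.log (1 - s₁)) ≤ c * Real.log 2 := by
      have := mul_le_mul_of_nonneg_left hlog2 hc0.le
      rw [hlhalf] at this
      linarith
    have hdistr : c * (Real.log s₁ - Real.log (1 - s₁)) =
        c * Real.log s₁ - c * Real.log (1 - s₁) := by ring
    show ω * (1 - 2 * s₁) + c * (Real.log s₁ - Real.log (1 - s₁)) < 0
    linarith
  -- IVT: get μ0 ∈ [s₁, b] with g μ0 = 0
  obtain ⟨μ0, hμ0mem, hgμ0⟩ : ∃ μ0 ∈ Set.Icc s₁ b, g μ0 = 0 := by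
    have hcont : ContinuousOn g (Set.Icc s₁ b) := by
      apply hgc.mono
      intro x hx
      exact ⟨lt_of_lt_of_le hs₁0 hx.1, le_trans hx.2 hbh.le⟩
    have := intermediate_value_Icc hs₁b.le hcont
    have h0mem : (0 : ℝ) ∈ Set.Icc (g s₁) (g b) := ⟨hgs₁.le, hgb.le⟩
    obtain ⟨μ0, hμ0, hgμ0⟩ := this h0mem
    exact ⟨μ0, hμ0, hgμ0⟩
  have hμ0pos : 0 < μ0 := lt_of_lt_of_le hs₁0 hμ0mem.1
  have hμ0half : μ0 < 1 / 2 := lt_of_le_of_lt hμ0mem.2 hbh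
  -- strict concavity of g on Ioc 0 (1/2)
  have hconc : StrictConcaveOn ℝ (Set.Ioc (0 : ℝ) (1 / 2)) g := by
    apply StrictAntiOn.strictConcaveOn_of_deriv (convex_Ioc _ _) hgc
    rw [interior_Ioc]
    intro x hx y hy hxy
    have hx0 : 0 < x := hx.1
    have hy0 : 0 < y := hy.1
    have hx1 : x < 1 := by linarith [hx.2]
    have hy1 : y < 1 := by linarith [hy.2]
    rw [(hg' x hx0 hx1).deriv, (hg' y hy0 hy1).deriv, hinv x hx0 hx1, hinv y hy0 hy1]
    have hmono : x * (1 - x) < y * (1 - y) := by nlinarith [hx.2, hy.2]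
    have hpx : 0 < x * (1 - x) := mul_pos hx0 (by linarith)
    have hpy : 0 < y * (1 - y) := mul_pos hy0 (by linarith)
    have : 1 / (y * (1 - y)) < 1 / (x * (1 - x)) :=
      one_div_lt_one_div_of_lt hpx hmono
    nlinarith
  -- sign of g on (0, μ0): negative
  have hgneg : ∀ x ∈ Set.Ioo (0 : ℝ) μ0, g x < 0 := by
    intro x hx
    by_contra h
    push_neg at h
    have hx2 : x < 1 / 2 := lt_trans hx.2 hμ0half
    set a1 : ℝ := (1 / 2 - μ0) / (1 / 2 - x) with ha1
    set a2 : ℝ := (μ0 - x) / (1 / 2 - x) with ha2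
    have hden : 0 < 1 / 2 - x := by linarith
    have ha1p : 0 < a1 := div_pos (by linarith) hden
    have ha2p : 0 < a2 := div_pos (by linarith [hx.2]) hden
    have hsum : a1 + a2 = 1 := by
      rw [ha1, ha2, ← add_div, div_eq_one_iff_eq hden.ne']; ring
    have hcomb : a1 • x + a2 • (1 / 2 : ℝ) = μ0 := by
      rw [smul_eq_mul, smul_eq_mul, ha1, ha2, div_mul_eq_mul_div, div_mul_eq_mul_div,
        ← add_div, show (1 / 2 - μ0) * x + (μ0 - x) * (1 / 2) = μ0 * (1 / 2 - x) by ring,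
        mul_div_assoc, div_self hden.ne', mul_one]
    have hkey := hconc.2 (x := x) ⟨hx.1, hx2.le⟩ (y := (1 / 2 : ℝ))
      ⟨by norm_num, le_refl _⟩ (by linarith) ha1p ha2p hsum
    rw [hcomb, hghalf, hgμ0, smul_eq_mul, smul_eq_mul] at hkey
    nlinarith
  -- sign of g on (μ0, 1/2): positive
  have hgpos : ∀ x ∈ Set.Ioo μ0 (1 / 2 : ℝ), 0 < g x := by
    intro x hx
    set a1 : ℝ := (1 / 2 - x) / (1 / 2 - μ0) with ha1
    set a2 : ℝ := (x - μ0) / (1 / 2 - μ0) with ha2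
    have hden : 0 < 1 / 2 - μ0 := by linarith
    have ha1p : 0 < a1 := div_pos (by linarith [hx.2]) hden
    have ha2p : 0 < a2 := div_pos (by linarith [hx.1]) hden
    have hsum : a1 + a2 = 1 := by
      rw [ha1, ha2, ← add_div, div_eq_one_iff_eq hden.ne']; ring
    have hcomb : a1 • μ0 + a2 • (1 / 2 : ℝ) = x := by
      rw [smul_eq_mul, smul_eq_mul, ha1, ha2, div_mul_eq_mul_div, div_mul_eq_mul_div,
        ← add_div, show (1 / 2 - x) * μ0 + (x - μ0) * (1 / 2) = x * (1 / 2 - μ0) by ring,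
        mul_div_assoc, div_self hden.ne', mul_one]
    have hkey := hconc.2 (x := μ0) ⟨hμ0pos, hμ0half.le⟩ (y := (1 / 2 : ℝ))
      ⟨by norm_num, le_refl _⟩ (by linarith) ha1p ha2p hsum
    rw [hcomb, hghalf, hgμ0, smul_eq_mul, smul_eq_mul] at hkey
    nlinarith
  -- fbar strictly decreasing on [0, μ0]
  have hantif : StrictAntiOn (fbar ω K T) (Set.Icc 0 μ0) := by
    apply strictAntiOn_of_deriv_neg (convex_Icc _ _) (fbar_cont ω K T).continuousOn
    rw [interior_Icc]
    intro x hx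
    have hx1 : x < 1 := by linarith [hx.2, hμ0half]
    rw [(fbar_hasDerivAt ω K T x hx.1 hx1).deriv]
    exact hgneg x hx
  -- fbar strictly increasing on [μ0, 1/2]
  have hmonof : StrictMonoOn (fbar ω K T) (Set.Icc μ0 (1 / 2)) := by
    apply strictMonoOn_of_deriv_pos (convex_Icc _ _) (fbar_cont ω K T).continuousOn
    rw [interior_Icc]
    intro x hx
    have hx1 : x < 1 := by linarith [hx.2]
    rw [(fbar_hasDerivAt ω K T x (lt_trans hμ0pos hx.1) hx1).deriv]
    exact hgpos x hx
  -- the key claim on [0, 1/2]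
  have hkey : ∀ s ∈ Set.Icc (0 : ℝ) (1 / 2), s ≠ μ0 → fbar ω K T μ0 < fbar ω K T s := by
    intro s hs hne
    rcases lt_or_gt_of_ne hne with h | h
    · exact hantif ⟨hs.1, by linarith⟩ ⟨hμ0pos.le, le_refl _⟩ h
    · exact hmonof ⟨le_refl _, hμ0half.le⟩ ⟨h.le, hs.2⟩ h
  refine ⟨μ0, ⟨hμ0pos, hμ0half⟩, (fbar_symm ω K T μ0).symm, ?_⟩
  intro s hs hne1 hne2
  rcases le_or_gt s (1 / 2) with h | h
  · exact hkey s ⟨hs.1, h⟩ hne1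
  · rw [← fbar_symm ω K T s]
    apply hkey (1 - s) ⟨by linarith [hs.2], by linarith⟩
    intro heq
    exact hne2 (by linarith)
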